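/- Let T > 0, Γ > 0, γ > 0, let B_x, B_y : [0,T] → ℝ and y : [0,T] → ℝ be continuous, and let ρ̂ : [0,T] → M₂(ℂ) be differentiable with ρ̂'(t) = i[B_x(T−t)σ_x + B_y(T−t)σ_y, ρ̂(t)] − Γ(σ_z ρ̂(t) σ_z − ρ̂(t)) + (Γ−γ)σ_z(tr(σ_z ρ̂(t)) − y(T−t)) for all t ∈ [0,T]. If ρ̂(0) is Hermitian and tr(ρ̂(0)) = 1, then ρ̂(t) is Hermitian and tr(ρ̂(t)) = 1 for all t ∈ [0,T]. -/

import Mathlib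

open Matrix MeasureTheory Filter Set

attribute [local instance] Matrix.normedAddCommGroup Matrix.normedSpace

noncomputable def σx : Matrix (Fin 2) (Fin 2) ℂ := !![0, 1; 1, 0]
noncomputable def σy : Matrix (Fin 2) (Fin 2) ℂ := !![0, -Complex.I; Complex.I, 0]
noncomputable def σz : Matrix (Fin 2) (Fin 2) ℂ := !![1, 0; 0, -1]

/-- The matrix commutator `[A, B] = A * B - B * A`. -/
noncomputable def mcomm (A B : Matrix (Fin 2) (Fin 2) ℂ) : Matrix (Fin 2) (Fin 2) ℂ := A * B - B * A

local notation "M2" => Matrix (Fin 2) (Fin 2) ℂ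

namespace BOaux

set_option maxHeartbeats 1000000

lemma norm_mul_le2 (A B : M2) : ‖A * B‖ ≤ 2 * ‖A‖ * ‖B‖ := by
  rw [Matrix.norm_le_iff (by positivity)]
  intro i j
  rw [Matrix.mul_apply, Fin.sum_univ_two]
  have h1 : ‖A i 0‖ ≤ ‖A‖ := Matrix.norm_entry_le_entrywise_sup_norm A
  have h2 : ‖A i 1‖ ≤ ‖A‖ := Matrix.norm_entry_le_entrywise_sup_norm A
  have h3 : ‖B 0 j‖ ≤ ‖B‖ := Matrix.norm_entry_le_entrywise_sup_norm B
  have h4 : ‖B 1 j‖ ≤ ‖B‖ := Matrix.norm_entry_le_entrywise_sup_norm B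
  calc ‖A i 0 * B 0 j + A i 1 * B 1 j‖ ≤ ‖A i 0 * B 0 j‖ + ‖A i 1 * B 1 j‖ := norm_add_le _ _
    _ = ‖A i 0‖ * ‖B 0 j‖ + ‖A i 1‖ * ‖B 1 j‖ := by rw [norm_mul, norm_mul]
    _ ≤ 2 * ‖A‖ * ‖B‖ := by
        nlinarith [norm_nonneg (A i 0), norm_nonneg (B 0 j), norm_nonneg (A i 1),
          norm_nonneg (B 1 j), norm_nonneg A, norm_nonneg B]

lemma norm_σx : ‖σx‖ ≤ 1 := by
  rw [Matrix.norm_le_iff zero_le_one]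
  intro i j; fin_cases i <;> fin_cases j <;> simp [σx]

lemma norm_σy : ‖σy‖ ≤ 1 := by
  rw [Matrix.norm_le_iff zero_le_one]
  intro i j; fin_cases i <;> fin_cases j <;> simp [σy]

lemma norm_σz : ‖σz‖ ≤ 1 := by
  rw [Matrix.norm_le_iff zero_le_one]
  intro i j; fin_cases i <;> fin_cases j <;> simp [σz]

lemma norm_trace_le2 (A : M2) : ‖A.trace‖ ≤ 2 * ‖A‖ := by
  rw [Matrix.trace_fin_two]
  calc ‖(A 0 0 : ℂ) + A 1 1‖ ≤ ‖A 0 0‖ + ‖A 1 1‖ := norm_add_le _ _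
    _ ≤ 2 * ‖A‖ := by
        have h1 : ‖A 0 0‖ ≤ ‖A‖ := Matrix.norm_entry_le_entrywise_sup_norm A
        have h2 : ‖A 1 1‖ ≤ ‖A‖ := Matrix.norm_entry_le_entrywise_sup_norm A
        linarith

/-- conjugate transpose as a continuous ℝ-linear map -/
noncomputable def ctCLM : M2 →L[ℝ] M2 :=
  LinearMap.mkContinuous
    { toFun := fun A => Aᴴ
      map_add' := fun A B => Matrix.conjTranspose_add A B
      map_smul' := fun r A => by
        ext i j
        simp [Matrix.conjTranspose_apply, Matrix.smul_apply, Complex.real_smul,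
          _root_.map_mul, Complex.conj_ofReal] }
    1 (fun A => by simp [Matrix.norm_conjTranspose])

@[simp] lemma ctCLM_apply (A : M2) : ctCLM A = Aᴴ := rfl

/-- trace as a continuous ℝ-linear map -/
noncomputable def trCLM : M2 →L[ℝ] ℂ :=
  LinearMap.mkContinuous
    { toFun := fun A => A.trace
      map_add' := fun A B => Matrix.trace_add A B
      map_smul' := fun r A => by simp [Matrix.trace_smul] }
    2 (fun A => norm_trace_le2 A)

@[simp] lemma trCLM_apply (A : M2) : trCLM A = A.trace := rfl

/-- the RHS of the ODE -/
noncomputable def rhs (b1 b2 g1 g2 w : ℝ) (A : M2) : M2 :=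
  Complex.I • mcomm ((b1:ℂ) • σx + (b2:ℂ) • σy) A
    - (g1 : ℂ) • (σz * A * σz - A)
    + (((g1:ℂ) - (g2:ℂ)) * ((σz * A).trace - (w:ℂ))) • σz

/-- trace of the RHS vanishes -/
lemma trace_rhs (b1 b2 g1 g2 w : ℝ) (A : M2) : (rhs b1 b2 g1 g2 w A).trace = 0 := by
  simp only [rhs, mcomm, Matrix.trace_fin_two,
    Matrix.add_apply, Matrix.sub_apply, Matrix.smul_apply, Matrix.mul_apply,
    Fin.sum_univ_two, σx, σy, σz, Matrix.cons_val', Matrix.cons_val_zero, Matrix.cons_val_one,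
    Matrix.head_cons, Matrix.head_fin_const, Matrix.empty_val', Matrix.cons_val_fin_one,
    Matrix.of_apply, smul_eq_mul]
  ring

/-- the conjugate-transposed RHS minus the RHS, as a function of Δ = Aᴴ - A -/
lemma rhs_conjTranspose_sub (b1 b2 g1 g2 w : ℝ) (A : M2) :
    (rhs b1 b2 g1 g2 w A)ᴴ - rhs b1 b2 g1 g2 w A
      = rhs b1 b2 g1 g2 0 (Aᴴ - A) := by
  ext i j
  fin_cases i <;> fin_cases j <;>
  · simp only [rhs, mcomm, Matrix.trace_fin_two, Fin.mk_zero, Fin.mk_one, Fin.isValue,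
      Matrix.conjTranspose_apply, Matrix.add_apply, Matrix.sub_apply, Matrix.smul_apply,
      Matrix.mul_apply, Fin.sum_univ_two, σx, σy, σz, Matrix.cons_val', Matrix.cons_val_zero,
      Matrix.cons_val_one, Matrix.head_cons, Matrix.head_fin_const, Matrix.empty_val',
      Matrix.cons_val_fin_one, Matrix.of_apply, smul_eq_mul, star_add, star_sub, star_mul',
      star_smul, map_add, map_sub, _root_.map_mul, map_zero, _root_.map_one, Complex.conj_ofReal,
      Complex.conj_I, Complex.ofReal_zero, map_neg, RCLike.star_def, star_zero,
      star_one, sub_zero, mul_zero, zero_mul, mul_one, one_mul, mul_neg, neg_mul, neg_neg,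
      add_zero, zero_add, zero_sub, sub_self, neg_zero]
    ring

/-- norm bound for the linear part of the RHS -/
lemma norm_rhs0_le (b1 b2 g1 g2 : ℝ) (Δ : M2) :
    ‖rhs b1 b2 g1 g2 0 Δ‖ ≤ (4 * (|b1| + |b2|) + 5 * |g1| + 4 * |g1 - g2|) * ‖Δ‖ := by
  have hΔ : (0:ℝ) ≤ ‖Δ‖ := norm_nonneg _
  set H : M2 := (b1:ℂ) • σx + (b2:ℂ) • σy with hH
  have nH : ‖H‖ ≤ |b1| + |b2| := by
    calc ‖H‖ ≤ ‖(b1:ℂ) • σx‖ + ‖(b2:ℂ) • σy‖ := norm_add_le _ _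
      _ = |b1| * ‖σx‖ + |b2| * ‖σy‖ := by
          rw [norm_smul, norm_smul, Complex.norm_real, Complex.norm_real,
            Real.norm_eq_abs, Real.norm_eq_abs]
      _ ≤ |b1| + |b2| := by
          nlinarith [norm_σx, norm_σy, abs_nonneg b1, abs_nonneg b2, norm_nonneg σx]
  have hHn : (0:ℝ) ≤ ‖H‖ := norm_nonneg _
  have n1 : ‖mcomm H Δ‖ ≤ 4 * (|b1| + |b2|) * ‖Δ‖ := by
    calc ‖mcomm H Δ‖ ≤ ‖H * Δ‖ + ‖Δ * H‖ := norm_sub_le _ _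
      _ ≤ 2 * ‖H‖ * ‖Δ‖ + 2 * ‖Δ‖ * ‖H‖ := add_le_add (norm_mul_le2 _ _) (norm_mul_le2 _ _)
      _ ≤ 4 * (|b1| + |b2|) * ‖Δ‖ := by nlinarith
  have nzd : ‖σz * Δ‖ ≤ 2 * ‖Δ‖ := by
    have := norm_mul_le2 σz Δ
    nlinarith [norm_σz]
  have n2 : ‖σz * Δ * σz - Δ‖ ≤ 5 * ‖Δ‖ := by
    have h1 : ‖σz * Δ * σz‖ ≤ 2 * ‖σz * Δ‖ * ‖σz‖ := norm_mul_le2 _ _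
    have h2 : ‖σz * Δ * σz - Δ‖ ≤ ‖σz * Δ * σz‖ + ‖Δ‖ := norm_sub_le _ _
    nlinarith [norm_σz, norm_nonneg (σz * Δ)]
  have n3 : ‖(((g1:ℂ) - (g2:ℂ)) * ((σz * Δ).trace - ((0:ℝ):ℂ))) • σz‖ ≤ 4 * |g1 - g2| * ‖Δ‖ := by
    rw [norm_smul]
    have htr : ‖(σz * Δ).trace - ((0:ℝ):ℂ)‖ ≤ 4 * ‖Δ‖ := by
      rw [Complex.ofReal_zero, sub_zero]
      have := norm_trace_le2 (σz * Δ)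
      nlinarith
    have hg : ‖((g1:ℂ) - (g2:ℂ))‖ = |g1 - g2| := by
      rw [← Complex.ofReal_sub, Complex.norm_real, Real.norm_eq_abs]
    rw [norm_mul, hg]
    calc |g1 - g2| * ‖(σz * Δ).trace - ((0:ℝ):ℂ)‖ * ‖σz‖
        ≤ |g1 - g2| * ‖(σz * Δ).trace - ((0:ℝ):ℂ)‖ * 1 := by
          apply mul_le_mul_of_nonneg_left norm_σz (by positivity)
      _ = |g1 - g2| * ‖(σz * Δ).trace - ((0:ℝ):ℂ)‖ := mul_one _
      _ ≤ |g1 - g2| * (4 * ‖Δ‖) := mul_le_mul_of_nonneg_left htr (abs_nonneg _)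
      _ = 4 * |g1 - g2| * ‖Δ‖ := by ring
  calc ‖rhs b1 b2 g1 g2 0 Δ‖
      ≤ ‖Complex.I • mcomm H Δ - (g1:ℂ) • (σz * Δ * σz - Δ)‖
        + ‖(((g1:ℂ) - (g2:ℂ)) * ((σz * Δ).trace - ((0:ℝ):ℂ))) • σz‖ := norm_add_le _ _
    _ ≤ ‖Complex.I • mcomm H Δ‖ + ‖(g1:ℂ) • (σz * Δ * σz - Δ)‖
        + ‖(((g1:ℂ) - (g2:ℂ)) * ((σz * Δ).trace - ((0:ℝ):ℂ))) • σz‖ :=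
        add_le_add_left (norm_sub_le _ _) _
    _ ≤ (4 * (|b1| + |b2|) + 5 * |g1| + 4 * |g1 - g2|) * ‖Δ‖ := by
        rw [norm_smul, norm_smul, Complex.norm_I, one_mul, Complex.norm_real, Real.norm_eq_abs]
        nlinarith [abs_nonneg g1, mul_le_mul_of_nonneg_left n2 (abs_nonneg g1)]

end BOaux

open BOaux in
/-- the backward observer dynamics preserves Hermitianity and the trace. -/
theorem backward_observer_hermitian_trace_preserving
    (T Γ γ : ℝ) (hT : 0 < T) (hΓ : 0 < Γ) (hγ : 0 < γ)
    (Bx By y : ℝ → ℝ)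
    (hBx : ContinuousOn Bx (Icc 0 T)) (hBy : ContinuousOn By (Icc 0 T))
    (hy : ContinuousOn y (Icc 0 T))
    (ρ : ℝ → Matrix (Fin 2) (Fin 2) ℂ)
    (hρ : ∀ t ∈ Icc (0:ℝ) T, HasDerivWithinAt ρ
      (Complex.I • mcomm ((Bx (T - t) : ℂ) • σx + (By (T - t) : ℂ) • σy) (ρ t)
        - (Γ : ℂ) • (σz * ρ t * σz - ρ t)
        + (((Γ : ℂ) - (γ : ℂ)) * ((σz * ρ t).trace - (y (T - t) : ℂ))) • σz)
      (Icc 0 T) t)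
    (h0herm : (ρ 0).IsHermitian) (h0tr : (ρ 0).trace = 1) :
    ∀ t ∈ Icc (0:ℝ) T, (ρ t).IsHermitian ∧ (ρ t).trace = 1 := by
  -- rewrite the given derivative in terms of `rhs`
  have hρ' : ∀ t ∈ Icc (0:ℝ) T, HasDerivWithinAt ρ
      (rhs (Bx (T - t)) (By (T - t)) Γ γ (y (T - t)) (ρ t)) (Icc 0 T) t := hρ
  have hρc : ContinuousOn ρ (Icc 0 T) := fun u hu => (hρ' u hu).continuousWithinAt
  -- Part 1 : the trace is constant
  have htr : ∀ t ∈ Icc (0:ℝ) T, (ρ t).trace = 1 := by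
    have hgc : ContinuousOn (fun u => trCLM (ρ u)) (Icc 0 T) :=
      trCLM.continuous.comp_continuousOn hρc
    have hgd : ∀ x ∈ Ico (0:ℝ) T, HasDerivWithinAt (fun u => trCLM (ρ u)) 0 (Ici x) x := by
      intro x hx
      have h1 := HasFDerivAt.comp_hasDerivWithinAt x (trCLM.hasFDerivAt)
        (hρ' x (Ico_subset_Icc_self hx))
      have h2 : trCLM (rhs (Bx (T - x)) (By (T - x)) Γ γ (y (T - x)) (ρ x)) = 0 := by
        rw [trCLM_apply, trace_rhs]
      erw [h2] at h1
      exact h1.mono_of_mem_nhdsWithin (Icc_mem_nhdsGE_of_mem hx)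
    have := constant_of_has_deriv_right_zero hgc hgd
    intro t ht
    have h := this t ht
    simp only [trCLM_apply] at h
    rw [h, h0tr]
  -- Part 2 : Hermitianity, via Grönwall applied to δ = ρᴴ - ρ
  set δ : ℝ → M2 := fun u => ctCLM (ρ u) - ρ u with hδ
  have hδc : ContinuousOn δ (Icc 0 T) :=
    (ctCLM.continuous.comp_continuousOn hρc).sub hρc
  have hδ0 : δ 0 = 0 := by
    simp only [hδ, ctCLM_apply]
    rw [h0herm]
    simp
  -- bounds on the coefficients
  obtain ⟨C1, hC1⟩ := isCompact_Icc.exists_bound_of_continuousOn hBx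
  obtain ⟨C2, hC2⟩ := isCompact_Icc.exists_bound_of_continuousOn hBy
  set K : ℝ := 4 * (C1 + C2) + 5 * |Γ| + 4 * |Γ - γ| with hK
  -- the derivative of δ
  have hδd : ∀ x ∈ Icc (0:ℝ) T,
      HasDerivWithinAt δ (rhs (Bx (T - x)) (By (T - x)) Γ γ 0 (δ x)) (Icc 0 T) x := by
    intro x hx
    have h1 := HasFDerivAt.comp_hasDerivWithinAt x (ctCLM.hasFDerivAt) (hρ' x hx)
    have h2 := h1.sub (hρ' x hx)
    have h3 : ctCLM (rhs (Bx (T - x)) (By (T - x)) Γ γ (y (T - x)) (ρ x))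
        - rhs (Bx (T - x)) (By (T - x)) Γ γ (y (T - x)) (ρ x)
        = rhs (Bx (T - x)) (By (T - x)) Γ γ 0 (δ x) := by
      rw [ctCLM_apply, rhs_conjTranspose_sub]
      simp only [hδ, ctCLM_apply]
    erw [h3] at h2
    exact h2
  -- Grönwall
  have hgron : ∀ x ∈ Icc (0:ℝ) T, ‖δ x‖ ≤ gronwallBound 0 K 0 (x - 0) := by
    apply norm_le_gronwallBound_of_norm_deriv_right_le hδc
    · intro x hx
      exact (hδd x (Ico_subset_Icc_self hx)).mono_of_mem_nhdsWithin (Icc_mem_nhdsGE_of_mem hx)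
    · rw [hδ0]; simp
    · intro x hx
      have hmem : T - x ∈ Icc (0:ℝ) T := ⟨by linarith [hx.2], by linarith [hx.1]⟩
      have hb1 : |Bx (T - x)| ≤ C1 := by
        have := hC1 (T - x) hmem; rwa [Real.norm_eq_abs] at this
      have hb2 : |By (T - x)| ≤ C2 := by
        have := hC2 (T - x) hmem; rwa [Real.norm_eq_abs] at this
      have h := norm_rhs0_le (Bx (T - x)) (By (T - x)) Γ γ (δ x)
      have hco : 4 * (|Bx (T - x)| + |By (T - x)|) + 5 * |Γ| + 4 * |Γ - γ| ≤ K := by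
        rw [hK]; linarith
      calc ‖rhs (Bx (T - x)) (By (T - x)) Γ γ 0 (δ x)‖
          ≤ (4 * (|Bx (T - x)| + |By (T - x)|) + 5 * |Γ| + 4 * |Γ - γ|) * ‖δ x‖ := h
        _ ≤ K * ‖δ x‖ := mul_le_mul_of_nonneg_right hco (norm_nonneg _)
        _ ≤ K * ‖δ x‖ + 0 := by linarith
  intro t ht
  refine ⟨?_, htr t ht⟩
  have h := hgron t ht
  rw [gronwallBound_ε0_δ0] at h
  have hδt : δ t = 0 := by
    have := norm_nonneg (δ t)
    have h0 : ‖δ t‖ = 0 := le_antisymm h this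
    exact norm_eq_zero.mp h0
  have : (ρ t)ᴴ - ρ t = 0 := by simpa [hδ, ctCLM_apply] using hδt
  exact sub_eq_zero.mp this
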